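/- Let J = diag(1, −1) ∈ GL_2(ℂ). Then the set {g · J · g^{−1} · J : g ∈ GL_2(ℂ)} is exactly the set of A ∈ GL_2(ℂ) whose two diagonal entries are equal and whose determinant is 1. -/

import Mathlib

/-- The matrix `J = diag(1, −1)`. -/
def Jmat : Matrix (Fin 2) (Fin 2) ℂ := !![1, 0; 0, -1]

set_option maxHeartbeats 1000000

/-- Lusztig 5.1 for `n = 2`: the orbit `{g·J·g⁻¹·J : g ∈ GL₂(ℂ)}` is exactly the set of
`2×2` complex matrices with equal diagonal entries and determinant `1`. -/
theorem orbit_eq_equal_diag_det_one :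
    {A : Matrix (Fin 2) (Fin 2) ℂ | ∃ g : GL (Fin 2) ℂ,
        A = (g : Matrix (Fin 2) (Fin 2) ℂ) * Jmat *
          ((g⁻¹ : GL (Fin 2) ℂ) : Matrix (Fin 2) (Fin 2) ℂ) * Jmat} =
      {A : Matrix (Fin 2) (Fin 2) ℂ | A 0 0 = A 1 1 ∧ A.det = 1} := by
  ext A
  simp only [Set.mem_setOf_eq]
  constructor
  · rintro ⟨g, rfl⟩
    set P := (g : Matrix (Fin 2) (Fin 2) ℂ) with hP
    set Q := ((g⁻¹ : GL (Fin 2) ℂ) : Matrix (Fin 2) (Fin 2) ℂ) with hQ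
    have hQP : Q * P = 1 := g.inv_mul
    have hPQ : P * Q = 1 := g.mul_inv
    have h00 := congrFun (congrFun hQP 0) 0
    have h11 := congrFun (congrFun hQP 1) 1
    simp [Matrix.mul_apply, Fin.sum_univ_two, Matrix.one_apply] at h00 h11
    constructor
    · simp [Matrix.mul_apply, Fin.sum_univ_two, Jmat]
      linear_combination h00 - h11
    · have hdet : P.det * Q.det = 1 := by
        have : (P * Q).det = 1 := by rw [hPQ]; simp
        rwa [Matrix.det_mul] at this
      have hJ : Jmat.det = -1 := by simp [Jmat]
      simp only [Matrix.det_mul, hJ]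
      linear_combination hdet
  · rintro ⟨h1, h2⟩
    rw [Matrix.det_fin_two] at h2
    set t := A 0 0 with ht
    set u := A 0 1 with hu
    set v := A 1 0 with hv
    have hA : A = !![t, u; v, t] := by
      rw [Matrix.eta_fin_two A, ← h1]
    have hdet : t * t - u * v = 1 := by rw [← h1] at h2; linear_combination h2
    by_cases hcu : u = 0
    · by_cases hcv : v = 0
      · have ht2 : t * t = 1 := by rw [hcu, hcv] at hdet; linear_combination hdet
        rcases mul_self_eq_one_iff.mp ht2 with h | h
        · refine ⟨1, ?_⟩
          rw [hA, hcu, hcv, h]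
          norm_num [Jmat, Matrix.mul_fin_two, Matrix.one_fin_two]
        · refine ⟨⟨!![0,1;1,0], !![0,1;1,0],
            by rw [Matrix.one_fin_two]; norm_num [Matrix.mul_fin_two],
            by rw [Matrix.one_fin_two]; norm_num [Matrix.mul_fin_two]⟩, ?_⟩
          rw [hA, hcu, hcv, h]
          norm_num [Jmat, Matrix.mul_fin_two]
      · -- v ≠ 0
        refine ⟨⟨!![(t+1)/v, t - 1; 1, v], !![v/2, (1-t)/2; -1/2, (t+1)/(2*v)], ?_, ?_⟩, ?_⟩
        · ext i j
          fin_cases i <;> fin_cases j <;>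
            simp [Matrix.mul_apply, Fin.sum_univ_two, Matrix.one_apply] <;> field_simp <;> ring
        · ext i j
          fin_cases i <;> fin_cases j <;>
            simp [Matrix.mul_apply, Fin.sum_univ_two, Matrix.one_apply] <;> field_simp <;> ring
        · rw [hA]
          ext i j
          fin_cases i <;> fin_cases j <;>
            simp [Matrix.mul_apply, Fin.sum_univ_two, Jmat] <;> field_simp <;>
            first
            | ring1
            | linear_combination (1) * hdet
            | linear_combination (-1) * hdet
            | linear_combination (-(4*v)-1) * hdet
            | linear_combination (-(4*u)-1) * hdet
            | linear_combination (-(4*v)) * hdet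
            | linear_combination (-(4*u)) * hdet
            | linear_combination (-2) * hdet
    · -- u ≠ 0
      refine ⟨⟨!![u, 1; t - 1, (t+1)/u], !![(t+1)/(2*u), -1/2; (1-t)/2, u/2], ?_, ?_⟩, ?_⟩
      · ext i j
        fin_cases i <;> fin_cases j <;>
          simp [Matrix.mul_apply, Fin.sum_univ_two, Matrix.one_apply] <;> field_simp <;> ring
      · ext i j
        fin_cases i <;> fin_cases j <;>
          simp [Matrix.mul_apply, Fin.sum_univ_two, Matrix.one_apply] <;> field_simp <;> ring
      · rw [hA]
        ext i j
        fin_cases i <;> fin_cases j <;>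
          simp [Matrix.mul_apply, Fin.sum_univ_two, Jmat] <;> field_simp <;>
          first
            | ring1
            | linear_combination (1) * hdet
            | linear_combination (-1) * hdet
            | linear_combination (-(4*v)-1) * hdet
            | linear_combination (-(4*u)-1) * hdet
            | linear_combination (-(4*v)) * hdet
            | linear_combination (-(4*u)) * hdet
            | linear_combination (-2) * hdet
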